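/- Let Ĥ be a weakly balanced bipartite signed graph (no purely red edges). If Ĥ has no chain, then the set D (the reachability closure in H⁺ of the set D_0 of all pairs (x,y) such that some vertex z has a bicoloured edge zx and a blue edge zy) contains no circuit. -/

import Mathlib

variable {A B : Type*}

/-- An arc of the pair digraph `H⁺` of a bipartite graph with parts `A`, `B`. -/
def PairDom (E : A → B → Prop) : (A × A) ⊕ (B × B) → (A × A) ⊕ (B × B) → Prop
  | Sum.inl (a, a'), Sum.inr (b, b') => E a b ∧ E a' b' ∧ ¬ E a b'
  | Sum.inr (b, b'), Sum.inl (a, a') => E a b ∧ E a' b' ∧ ¬ E a' b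
  | _, _ => False

/-- A circuit in a set `D` of vertices of `H⁺`: pairs
`(x_0,x_1), (x_1,x_2), …, (x_n,x_0)`, `n ≥ 1`, all in `D`. -/
def HasCircuit (D : Set ((A × A) ⊕ (B × B))) : Prop :=
  ∃ n : ℕ, 0 < n ∧
    ((∃ x : Fin (n + 1) → A, ∀ i, Sum.inl (x i, x (i + 1)) ∈ D) ∨
     (∃ x : Fin (n + 1) → B, ∀ i, Sum.inr (x i, x (i + 1)) ∈ D))

/-- The set `D_0` of pairs `(x,y)` such that for some vertex `z` (in the opposite
part), `zx` is a bicoloured edge and `zy` is a blue (unicoloured) edge. -/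
def DZero (E bic : A → B → Prop) : Set ((A × A) ⊕ (B × B)) := fun p =>
  match p with
  | Sum.inl (x, y) => ∃ z : B, bic x z ∧ E y z ∧ ¬ bic y z
  | Sum.inr (x, y) => ∃ z : A, bic z x ∧ E z y ∧ ¬ bic z y

/-- The reachability closure `D` of `D_0` in the pair digraph `H⁺`. -/
def DClosure (E bic : A → B → Prop) : Set ((A × A) ⊕ (B × B)) :=
  {q | ∃ p ∈ DZero E bic, Relation.ReflTransGen (PairDom E) p q}

/-- The edge relation of the underlying graph on the vertex set `A ⊕ B`. -/
def EdgeSum (E : A → B → Prop) : A ⊕ B → A ⊕ B → Prop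
  | Sum.inl a, Sum.inr b => E a b
  | Sum.inr b, Sum.inl a => E a b
  | _, _ => False

/-- A chain in a signed graph with edge relation `Ed` and bicoloured edges `bic`:
two walks `U = u_0, …, u_k` and `D = d_0, …, d_k` of equal length from `u` to `v`,
with `u_0u_1` and `d_{k-1}d_k` unicoloured, `u_0d_1` and `u_{k-1}u_k` bicoloured, and
for `1 ≤ i ≤ k-2` either `u_iu_{i+1}`, `d_id_{i+1}` are edges while `d_iu_{i+1}` is not,
or `u_iu_{i+1}`, `d_id_{i+1}` are bicoloured while `d_iu_{i+1}` is not bicoloured. -/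
def HasChain {V : Type*} (Ed bic : V → V → Prop) : Prop :=
  ∃ (k : ℕ) (U D : ℕ → V), 0 < k ∧ U 0 = D 0 ∧ U k = D k ∧
    (Ed (U 0) (U 1) ∧ ¬ bic (U 0) (U 1)) ∧
    (Ed (D (k - 1)) (D k) ∧ ¬ bic (D (k - 1)) (D k)) ∧
    bic (U 0) (D 1) ∧ bic (U (k - 1)) (U k) ∧
    ∀ i, 1 ≤ i → i ≤ k - 2 →
      ((Ed (U i) (U (i + 1)) ∧ Ed (D i) (D (i + 1)) ∧ ¬ Ed (D i) (U (i + 1))) ∨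
       (bic (U i) (U (i + 1)) ∧ bic (D i) (D (i + 1)) ∧ ¬ bic (D i) (U (i + 1))))

/-! ### Auxiliary development on the symmetric vertex set `V = A ⊕ B` -/

section Aux

variable {V : Type*}

/-- Pair-domination with respect to a (symmetric) relation `R` on `V`. -/
def PdR (R : V → V → Prop) : V × V → V × V → Prop :=
  fun p q => R p.1 q.1 ∧ R p.2 q.2 ∧ ¬ R p.1 q.2

/-- Arcs of the doubled pair digraph: edge-arcs or bicoloured-arcs. -/
def Arc2 (Ed Bd : V → V → Prop) : V × V → V × V → Prop :=
  fun p q => PdR Ed p q ∨ PdR Bd p q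

/-- Symmetric form of `D_0`. -/
def D0V (Ed Bd : V → V → Prop) : V × V → Prop :=
  fun p => ∃ z, Bd p.1 z ∧ Ed p.2 z ∧ ¬ Bd p.2 z

/-- Closure of `D0V` under `Arc2`. -/
def D2V (Ed Bd : V → V → Prop) : Set (V × V) :=
  {q | ∃ p, D0V Ed Bd p ∧ Relation.ReflTransGen (Arc2 Ed Bd) p q}

variable {Ed Bd : V → V → Prop}

lemma d0_mem_D2 {p : V × V} (hp : D0V Ed Bd p) : p ∈ D2V Ed Bd :=
  ⟨p, hp, Relation.ReflTransGen.refl⟩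

lemma D2_tail {p q : V × V} (hp : p ∈ D2V Ed Bd) (h : Arc2 Ed Bd p q) :
    q ∈ D2V Ed Bd := by
  obtain ⟨p₀, h0, hw⟩ := hp
  exact ⟨p₀, h0, hw.tail h⟩

variable (hEs : ∀ x y, Ed x y → Ed y x) (hBs : ∀ x y, Bd x y → Bd y x)
  (hBE : ∀ x y, Bd x y → Ed x y)

section Swap

include hEs hBs

lemma arc2_swap {p q : V × V} (h : Arc2 Ed Bd p q) :
    Arc2 Ed Bd (q.2, q.1) (p.2, p.1) := by
  rcases h with ⟨h1, h2, h3⟩ | ⟨h1, h2, h3⟩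
  · exact Or.inl ⟨hEs _ _ h2, hEs _ _ h1, fun h => h3 (hEs _ _ h)⟩
  · exact Or.inr ⟨hBs _ _ h2, hBs _ _ h1, fun h => h3 (hBs _ _ h)⟩

lemma walk_swap {p q : V × V} (h : Relation.ReflTransGen (Arc2 Ed Bd) p q) :
    Relation.ReflTransGen (Arc2 Ed Bd) (q.2, q.1) (p.2, p.1) := by
  induction h with
  | refl => exact Relation.ReflTransGen.refl
  | tail hb hbc ih => exact Relation.ReflTransGen.head (arc2_swap hEs hBs hbc) ih

end Swap

/-- Extract an indexed sequence from a reflexive-transitive walk. -/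
lemma exists_seq {α : Type*} {r : α → α → Prop} {p q : α}
    (h : Relation.ReflTransGen r p q) :
    ∃ (m : ℕ) (f : ℕ → α), f 0 = p ∧ f m = q ∧ ∀ t, t < m → r (f t) (f (t + 1)) := by
  induction h with
  | refl => exact ⟨0, fun _ => p, rfl, rfl, fun t ht => absurd ht (Nat.not_lt_zero t)⟩
  | @tail b c hb hbc ih =>
    obtain ⟨m, f, h0, hm, hs⟩ := ih
    refine ⟨m + 1, fun t => if t ≤ m then f t else c, ?_, ?_, ?_⟩
    · simpa using h0
    · simp
    · intro t ht
      rcases Nat.lt_or_ge t m with h' | h'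
      · simpa [Nat.le_of_lt h', Nat.succ_le_of_lt h'] using hs t h'
      · have htm : t = m := by omega
        subst htm
        simpa [hm] using hbc

omit hBE in
include hEs hBs in
/-- The key chain construction: a walk in the doubled pair digraph from a `D0V`
pair to a pair whose reverse is in `D0V` yields a chain. -/
lemma chain_of {p₀ q : V × V} (h0 : D0V Ed Bd p₀)
    (hw : Relation.ReflTransGen (Arc2 Ed Bd) p₀ q) (hrev : D0V Ed Bd (q.2, q.1)) :
    HasChain Ed Bd := by
  obtain ⟨z, hz1, hz2, hz3⟩ := h0
  obtain ⟨v', hv1, hv2, hv3⟩ := hrev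
  obtain ⟨m, f, hf0, hfm, hfs⟩ := exists_seq hw
  unfold HasChain
  refine ⟨m + 2,
    (fun t => if t = 0 then z else if t ≤ m + 1 then (f (t - 1)).2 else v'),
    (fun t => if t = 0 then z else if t ≤ m + 1 then (f (t - 1)).1 else v'),
    by omega, by simp, ?_, ?_, ?_, ?_, ?_, ?_⟩
  · simp only [if_neg (by omega : ¬ (m + 2 = 0)), if_neg (by omega : ¬ (m + 2 ≤ m + 1))]
  · simp only [if_pos rfl, if_neg (by omega : ¬ (1 = 0)), if_pos (by omega : 1 ≤ m + 1)]
    have : (1 : ℕ) - 1 = 0 := rfl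
    rw [this, hf0]
    exact ⟨hEs _ _ hz2, fun h => hz3 (hBs _ _ h)⟩
  · have h1 : m + 2 - 1 = m + 1 := by omega
    rw [h1]
    simp only [if_neg (by omega : ¬ (m + 1 = 0)), if_pos (le_refl (m + 1)),
      if_neg (by omega : ¬ (m + 2 = 0)), if_neg (by omega : ¬ (m + 2 ≤ m + 1))]
    have h2 : m + 1 - 1 = m := by omega
    rw [h2, hfm]
    exact ⟨hv2, hv3⟩
  · simp only [if_pos rfl, if_neg (by omega : ¬ (1 = 0)), if_pos (by omega : 1 ≤ m + 1)]
    have : (1 : ℕ) - 1 = 0 := rfl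
    rw [this, hf0]
    exact hBs _ _ hz1
  · have h1 : m + 2 - 1 = m + 1 := by omega
    rw [h1]
    simp only [if_neg (by omega : ¬ (m + 1 = 0)), if_pos (le_refl (m + 1)),
      if_neg (by omega : ¬ (m + 2 = 0)), if_neg (by omega : ¬ (m + 2 ≤ m + 1))]
    have h2 : m + 1 - 1 = m := by omega
    rw [h2, hfm]
    exact hv1
  · intro i hi1 hi2
    have hi2' : i ≤ m := by omega
    simp only [if_neg (by omega : ¬ (i = 0)), if_pos (by omega : i ≤ m + 1),
      if_neg (by omega : ¬ (i + 1 = 0)), if_pos (by omega : i + 1 ≤ m + 1)]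
    have h2 : i + 1 - 1 = i := by omega
    have h3 : i - 1 + 1 = i := by omega
    rw [h2]
    have := hfs (i - 1) (by omega)
    rw [h3] at this
    rcases this with ⟨e1, e2, e3⟩ | ⟨e1, e2, e3⟩
    · exact Or.inl ⟨e2, e1, e3⟩
    · exact Or.inr ⟨e2, e1, e3⟩

omit hBE in
include hEs hBs in
/-- If both a pair and its reverse belong to `D2V`, there is a chain. -/
lemma chain_of_both {x y : V} (hxy : (x, y) ∈ D2V Ed Bd) (hyx : (y, x) ∈ D2V Ed Bd) :
    HasChain Ed Bd := by
  obtain ⟨p, hp, hw⟩ := hyx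
  have hw' : Relation.ReflTransGen (Arc2 Ed Bd) (x, y) (p.2, p.1) := walk_swap hEs hBs hw
  obtain ⟨p₀, h0, hw0⟩ := hxy
  refine chain_of hEs hBs h0 (hw0.trans hw') ?_
  simpa using hp

omit hEs hBs hBE in
lemma not_diag (t : V) : (t, t) ∉ D2V Ed Bd := by
  rintro ⟨p, hp, hw⟩
  rcases Relation.ReflTransGen.cases_tail hw with heq | ⟨c, _, harc⟩
  · rw [← heq] at hp
    obtain ⟨z, h1, _, h3⟩ := hp
    exact h3 h1
  · rcases harc with ⟨r1, _, r3⟩ | ⟨r1, _, r3⟩ <;> exact r3 r1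

include hEs hBs in
lemma not_both (hnc : ¬ HasChain Ed Bd) {x y : V}
    (hxy : (x, y) ∈ D2V Ed Bd) (hyx : (y, x) ∈ D2V Ed Bd) : False :=
  hnc (chain_of_both hEs hBs hxy hyx)

include hEs hBs hBE in
/-- Saturation helper: if every neighbour of `u` is adjacent to both `v` and `w`,
then transitivity at `(u,v)`, `(v,w)` holds. -/
lemma sat_helper (hnc : ¬ HasChain Ed Bd) {u v w : V}
    (huv : (u, v) ∈ D2V Ed Bd) (hvw : (v, w) ∈ D2V Ed Bd)
    (hall : ∀ α, Ed u α → Ed α v ∧ Ed α w) : (u, w) ∈ D2V Ed Bd := by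
  -- extract a `D0V`-style witness for `(u,v)`
  have hwit : ∃ ζ, Bd u ζ ∧ Ed v ζ ∧ ¬ Bd v ζ := by
    obtain ⟨p₀, h0, hw⟩ := huv
    rcases Relation.ReflTransGen.cases_tail hw with heq | ⟨c, _, harc⟩
    · rw [← heq] at h0
      exact h0
    · rcases harc with ⟨r1, r2, r3⟩ | ⟨r1, r2, r3⟩
      · exact absurd (hall c.1 (hEs _ _ r1)).1 r3
      · refine ⟨c.1, hBs _ _ r1, hEs _ _ (hall c.1 (hBE _ _ (hBs _ _ r1))).1, fun h => r3 (hBs _ _ h)⟩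
  obtain ⟨ζ, hζ1, hζ2, hζ3⟩ := hwit
  have hζw : Ed ζ w := (hall ζ (hBE _ _ hζ1)).2
  by_cases hBwζ : Bd w ζ
  · exact absurd (d0_mem_D2 (⟨ζ, hBwζ, hζ2, hζ3⟩ : D0V Ed Bd (w, v)))
      (fun h => not_both hEs hBs hnc hvw h)
  · exact d0_mem_D2 ⟨ζ, hζ1, hEs _ _ hζw, hBwζ⟩

include hEs hBs hBE in
lemma transD2_aux (hnc : ¬ HasChain Ed Bd) {p₀ : V × V} (h0 : D0V Ed Bd p₀)
    {q : V × V} (hw : Relation.ReflTransGen (Arc2 Ed Bd) p₀ q) :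
    ∀ u, (u, q.1) ∈ D2V Ed Bd → (u, q.2) ∈ D2V Ed Bd := by
  induction hw with
  | refl =>
    intro u huv
    obtain ⟨z, hz1, hz2, hz3⟩ := h0
    have hvwD : (p₀.1, p₀.2) ∈ D2V Ed Bd := ⟨p₀, ⟨z, hz1, hz2, hz3⟩, by
      simpa using Relation.ReflTransGen.refl⟩
    by_cases hBuz : Bd u z
    · exact d0_mem_D2 ⟨z, hBuz, hz2, hz3⟩
    by_cases hEuz : Ed u z
    · exact absurd (d0_mem_D2 (⟨z, hz1, hEuz, hBuz⟩ : D0V Ed Bd (p₀.1, u)))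
        (fun h => not_both hEs hBs hnc huv h)
    by_cases h3a : ∃ α, Ed u α ∧ ¬ Ed α p₀.2
    · obtain ⟨α, hα1, hα2⟩ := h3a
      have hαz : (α, z) ∈ D2V Ed Bd :=
        D2_tail huv (Or.inl ⟨hα1, hBE _ _ hz1, hEuz⟩)
      exact D2_tail hαz (Or.inl ⟨hEs _ _ hα1, hEs _ _ hz2, hα2⟩)
    by_cases h3b : ∃ α, Ed u α ∧ ¬ Ed α p₀.1
    · obtain ⟨α, hα1, hα2⟩ := h3b
      push_neg at h3a
      have hαw : Ed α p₀.2 := h3a α hα1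
      have hαz : (α, z) ∈ D2V Ed Bd :=
        D2_tail huv (Or.inl ⟨hα1, hBE _ _ hz1, hEuz⟩)
      have hwv : (p₀.2, p₀.1) ∈ D2V Ed Bd :=
        D2_tail hαz (Or.inl ⟨hαw, hEs _ _ (hBE _ _ hz1), hα2⟩)
      exact absurd hwv (fun h => not_both hEs hBs hnc hvwD h)
    · push_neg at h3a h3b
      exact sat_helper hEs hBs hBE hnc huv hvwD fun α hα => ⟨h3b α hα, h3a α hα⟩
  | @tail b c hb hbc ih =>
    intro u huv
    obtain ⟨a, b2⟩ := b
    obtain ⟨v', w'⟩ := c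
    dsimp only at ih
    have hbD : (a, b2) ∈ D2V Ed Bd := ⟨p₀, h0, hb⟩
    have hcD : (v', w') ∈ D2V Ed Bd := ⟨p₀, h0, hb.tail hbc⟩
    -- the common part, once `¬ Ed a u` and the two adjacency facts are known
    have key : Ed a v' → Ed b2 w' → ¬ Ed a u → (u, w') ∈ D2V Ed Bd := by
      intro hav hbw hEau
      by_cases h3a : ∃ α, Ed u α ∧ ¬ Ed α w'
      · obtain ⟨α, hα1, hα2⟩ := h3a
        have hαa : (α, a) ∈ D2V Ed Bd :=
          D2_tail huv (Or.inl ⟨hα1, hEs _ _ hav, fun h => hEau (hEs _ _ h)⟩)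
        have hαb : (α, b2) ∈ D2V Ed Bd := ih α hαa
        exact D2_tail hαb (Or.inl ⟨hEs _ _ hα1, hbw, hα2⟩)
      by_cases h3b : ∃ α, Ed u α ∧ ¬ Ed α v'
      · obtain ⟨α, hα1, hα2⟩ := h3b
        push_neg at h3a
        have hαw : Ed α w' := h3a α hα1
        have hαa : (α, a) ∈ D2V Ed Bd :=
          D2_tail huv (Or.inl ⟨hα1, hEs _ _ hav, fun h => hEau (hEs _ _ h)⟩)
        have hwv : (w', v') ∈ D2V Ed Bd :=
          D2_tail hαa (Or.inl ⟨hαw, hav, hα2⟩)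
        exact absurd hwv (fun h => not_both hEs hBs hnc hcD h)
      · push_neg at h3a h3b
        exact sat_helper hEs hBs hBE hnc huv hcD fun α hα => ⟨h3b α hα, h3a α hα⟩
    rcases hbc with ⟨r1, r2, r3⟩ | ⟨r1, r2, r3⟩
    · -- edge-arc
      by_cases hEau : Ed a u
      · exact D2_tail hbD (Or.inl ⟨hEau, r2, r3⟩)
      · exact key r1 r2 hEau
    · -- bicoloured-arc
      by_cases hBau : Bd a u
      · exact D2_tail hbD (Or.inr ⟨hBau, r2, r3⟩)
      by_cases hEau : Ed a u
      · exact absurd (d0_mem_D2 (⟨a, hBs _ _ r1, hEs _ _ hEau,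
          fun h => hBau (hBs _ _ h)⟩ : D0V Ed Bd (v', u)))
          (fun h => not_both hEs hBs hnc huv h)
      · exact key (hBE _ _ r1) (hBE _ _ r2) hEau

include hEs hBs hBE in
/-- Transitivity of `D2V` in the absence of a chain. -/
lemma transD2 (hnc : ¬ HasChain Ed Bd) {u v w : V}
    (huv : (u, v) ∈ D2V Ed Bd) (hvw : (v, w) ∈ D2V Ed Bd) : (u, w) ∈ D2V Ed Bd := by
  obtain ⟨p₀, h0, hw⟩ := hvw
  exact transD2_aux hEs hBs hBE hnc h0 hw u huv

end Aux

/-- Embedding of same-side pairs into pairs of vertices of `A ⊕ B`. -/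
def iotaPair : (A × A) ⊕ (B × B) → (A ⊕ B) × (A ⊕ B) :=
  Sum.elim (fun p => (Sum.inl p.1, Sum.inl p.2)) (fun p => (Sum.inr p.1, Sum.inr p.2))

lemma dzero_iota {E bic : A → B → Prop} {p : (A × A) ⊕ (B × B)} (hp : p ∈ DZero E bic) :
    D0V (EdgeSum E) (EdgeSum bic) (iotaPair p) := by
  rcases p with ⟨x, y⟩ | ⟨x, y⟩
  · obtain ⟨z, h1, h2, h3⟩ := hp
    exact ⟨Sum.inr z, h1, h2, h3⟩
  · obtain ⟨z, h1, h2, h3⟩ := hp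
    exact ⟨Sum.inl z, h1, h2, h3⟩

lemma pairdom_iota {E : A → B → Prop} {p q : (A × A) ⊕ (B × B)} (h : PairDom E p q) :
    PdR (EdgeSum E) (iotaPair p) (iotaPair q) := by
  rcases p with ⟨a, a'⟩ | ⟨b, b'⟩ <;> rcases q with ⟨c, c'⟩ | ⟨d, d'⟩
  · exact h.elim
  · exact ⟨h.1, h.2.1, h.2.2⟩
  · exact ⟨h.1, h.2.1, h.2.2⟩
  · exact h.elim

lemma dclosure_iota {E bic : A → B → Prop} {q : (A × A) ⊕ (B × B)}
    (hq : q ∈ DClosure E bic) : iotaPair q ∈ D2V (EdgeSum E) (EdgeSum bic) := by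
  obtain ⟨p, hp, hw⟩ := hq
  refine ⟨iotaPair p, dzero_iota hp, ?_⟩
  clear hp
  induction hw with
  | refl => exact Relation.ReflTransGen.refl
  | tail hb hbc ih => exact ih.tail (Or.inl (pairdom_iota hbc))

/-- if a weakly balanced bipartite signed graph (no purely red edges)
has no chain, then the reachability closure `D` of `D_0` contains no circuit. -/
theorem statement2 [Fintype A] [Fintype B] (E bic : A → B → Prop)
    (hbic : ∀ a b, bic a b → E a b)
    (hnochain : ¬ HasChain (EdgeSum E) (EdgeSum bic)) :
    ¬ HasCircuit (DClosure E bic) := by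
  have hEs : ∀ x y : A ⊕ B, EdgeSum E x y → EdgeSum E y x := by
    rintro (a | b) (a' | b') h <;> first | exact h.elim | exact h
  have hBs : ∀ x y : A ⊕ B, EdgeSum bic x y → EdgeSum bic y x := by
    rintro (a | b) (a' | b') h <;> first | exact h.elim | exact h
  have hBE : ∀ x y : A ⊕ B, EdgeSum bic x y → EdgeSum E x y := by
    rintro (a | b) (a' | b') h
    · exact h.elim
    · exact hbic _ _ h
    · exact hbic _ _ h
    · exact h.elim
  rintro ⟨n, hn, hcirc⟩
  open Fin.NatCast in
  have main : ∀ y : Fin (n + 1) → A ⊕ B,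
      (∀ i, (y i, y (i + 1)) ∈ D2V (EdgeSum E) (EdgeSum bic)) → False := by
    intro y hy
    have key : ∀ k : ℕ,
        (y 0, y ((k + 1 : ℕ) : Fin (n + 1))) ∈ D2V (EdgeSum E) (EdgeSum bic) := by
      intro k
      induction k with
      | zero => simpa using hy 0
      | succ k ih =>
        have h2 := hy ((k + 1 : ℕ) : Fin (n + 1))
        have h3 := transD2 hEs hBs hBE hnochain ih h2
        have hcast : (((k + 1 : ℕ) : Fin (n + 1)) + 1) = ((k + 1 + 1 : ℕ) : Fin (n + 1)) := by
          push_cast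
          ring
        rwa [hcast] at h3
    have hdiag := key n
    have hcast2 : ((n + 1 : ℕ) : Fin (n + 1)) = 0 := Fin.natCast_self (n + 1)
    rw [hcast2] at hdiag
    exact not_diag (y 0) hdiag
  rcases hcirc with ⟨x, hx⟩ | ⟨x, hx⟩
  · exact main (fun i => Sum.inl (x i)) (fun i => dclosure_iota (hx i))
  · exact main (fun i => Sum.inr (x i)) (fun i => dclosure_iota (hx i))
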